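/- Let u and k be positive integers and set Q := 2u+1. If a_1, …, a_k are sampled independently and uniformly at random from the integer interval {−u, …, u}, then Pr[a_1 + ⋯ + a_k = 0] ≥ Pr[a_1 + ⋯ + a_k ≡ 0 (mod Q)] / (2k+1). -/

import Mathlib

open Finset

noncomputable def NNcard (u k : ℕ) (s : ℤ) : ℕ :=
  ((Fintype.piFinset fun _ : Fin k => Finset.Icc (-(u : ℤ)) (u : ℤ)).filter
    (fun a : Fin k → ℤ => ∑ i, a i = s)).card

lemma NNcard_zero (u : ℕ) (s : ℤ) : NNcard u 0 s = if s = 0 then 1 else 0 := by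
  simp only [NNcard, Finset.univ_eq_empty, Finset.sum_empty, eq_comm (a := (0:ℤ))]
  split <;> simp_all

lemma NNcard_neg (u k : ℕ) (s : ℤ) : NNcard u k (-s) = NNcard u k s := by
  unfold NNcard
  refine Finset.card_nbij' (fun a => -a) (fun a => -a) ?_ ?_ ?_ ?_
  · intro a ha
    simp only [Finset.mem_coe, Finset.mem_filter, Fintype.mem_piFinset, Finset.mem_Icc,
      Pi.neg_apply, Finset.sum_neg_distrib] at ha ⊢
    refine ⟨fun i => ?_, by omega⟩
    have := ha.1 i; omega
  · intro a ha
    simp only [Finset.mem_coe, Finset.mem_filter, Fintype.mem_piFinset, Finset.mem_Icc,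
      Pi.neg_apply, Finset.sum_neg_distrib] at ha ⊢
    refine ⟨fun i => ?_, by omega⟩
    have := ha.1 i; omega
  · intro a _; simp
  · intro a _; simp

lemma NNcard_succ (u k : ℕ) (s : ℤ) :
    NNcard u (k + 1) s = ∑ j ∈ Finset.Icc (-(u : ℤ)) (u : ℤ), NNcard u k (s - j) := by
  unfold NNcard
  rw [Finset.card_eq_sum_card_fiberwise (f := fun a : Fin (k+1) → ℤ => a 0)
    (t := Finset.Icc (-(u : ℤ)) (u : ℤ))]
  · refine Finset.sum_congr rfl fun j hj => ?_
    refine Finset.card_nbij' (fun a => Fin.tail a) (fun b => Fin.cons j b) ?_ ?_ ?_ ?_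
    · intro a ha
      simp only [Finset.mem_coe, Finset.mem_filter, Fintype.mem_piFinset] at ha ⊢
      obtain ⟨⟨hmem, hsum⟩, h0⟩ := ha
      refine ⟨fun i => hmem i.succ, ?_⟩
      rw [Fin.sum_univ_succ] at hsum
      simp [Fin.tail]
      omega
    · intro b hb
      simp only [Finset.mem_coe, Finset.mem_filter, Fintype.mem_piFinset] at hb ⊢
      obtain ⟨hmem, hsum⟩ := hb
      refine ⟨⟨fun i => ?_, ?_⟩, by simp⟩
      · rcases Fin.eq_zero_or_eq_succ i with h | ⟨i', rfl⟩
        · simpa [h] using hj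
        · simpa using hmem i'
      · rw [Fin.sum_univ_succ]
        simp [Fin.tail]
        omega
    · intro a ha
      simp only [Finset.mem_coe, Finset.mem_filter] at ha
      simp only
      rw [← ha.2]
      exact Fin.cons_self_tail a
    · intro b _; simp [Fin.tail_cons]
  · intro a ha
    simp only [Finset.mem_coe, Finset.mem_filter, Fintype.mem_piFinset] at ha
    exact ha.1 0

lemma NNcard_succ' (u k : ℕ) (s : ℤ) :
    NNcard u (k + 1) s = ∑ t ∈ Finset.Icc (s - (u : ℤ)) (s + (u : ℤ)), NNcard u k t := by
  rw [NNcard_succ]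
  refine Finset.sum_nbij' (fun j => s - j) (fun t => s - t) ?_ ?_ ?_ ?_ ?_
  · intro a ha; simp only [Finset.mem_Icc] at *; omega
  · intro a ha; simp only [Finset.mem_Icc] at *; omega
  · intro a ha; omega
  · intro a ha; omega
  · intro a ha; rfl

lemma step_lemma (u k : ℕ) (h : ∀ s : ℤ, 0 ≤ s → NNcard u k (s + 1) ≤ NNcard u k s) :
    ∀ x y : ℤ, |y| ≤ |x| → NNcard u k x ≤ NNcard u k y := by
  have mono' : ∀ n : ℕ, ∀ a : ℤ, 0 ≤ a → NNcard u k (a + n) ≤ NNcard u k a := by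
    intro n
    induction n with
    | zero => simp
    | succ m ihm =>
      intro a ha
      have he : (a + ((m : ℤ) + 1)) = (a + m) + 1 := by ring
      push_cast
      rw [he]
      exact (h (a + m) (by positivity)).trans (ihm a ha)
  have mono : ∀ a b : ℤ, 0 ≤ a → a ≤ b → NNcard u k b ≤ NNcard u k a := by
    intro a b ha hab
    have : b = a + ((b - a).toNat : ℤ) := by omega
    rw [this]
    exact mono' _ a ha
  intro x y hxy
  have hx : NNcard u k x = NNcard u k |x| := by
    rcases abs_choice x with h' | h' <;> rw [h']
    rw [← NNcard_neg u k x]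
  have hy : NNcard u k y = NNcard u k |y| := by
    rcases abs_choice y with h' | h' <;> rw [h']
    rw [← NNcard_neg u k y]
  rw [hx, hy]
  exact mono _ _ (abs_nonneg y) hxy

lemma NNcard_anti (u k : ℕ) : ∀ s : ℤ, 0 ≤ s → NNcard u k (s + 1) ≤ NNcard u k s := by
  induction k with
  | zero =>
    intro s hs
    rw [NNcard_zero, NNcard_zero]
    have : s + 1 ≠ 0 := by omega
    simp [this]
  | succ k ih =>
    intro s hs
    rw [NNcard_succ', NNcard_succ']
    have h1 : Finset.Icc (s + 1 - (u:ℤ)) (s + 1 + u) =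
        insert (s + (u:ℤ) + 1) (Finset.Icc (s + 1 - u) (s + u)) := by
      ext t; simp only [Finset.mem_Icc, Finset.mem_insert]; omega
    have h2 : Finset.Icc (s - (u:ℤ)) (s + u) =
        insert (s - (u:ℤ)) (Finset.Icc (s + 1 - u) (s + u)) := by
      ext t; simp only [Finset.mem_Icc, Finset.mem_insert]; omega
    rw [h1, h2, Finset.sum_insert (by simp only [Finset.mem_Icc]; omega),
      Finset.sum_insert (by simp only [Finset.mem_Icc]; omega)]
    have key : NNcard u k (s + (u:ℤ) + 1) ≤ NNcard u k (s - u) :=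
      step_lemma u k ih _ _ (by
        rw [abs_of_nonneg (by omega : (0:ℤ) ≤ s + u + 1), abs_le]; omega)
    exact add_le_add key (le_refl _)

lemma NNcard_le_zero (u k : ℕ) (s : ℤ) : NNcard u k s ≤ NNcard u k 0 :=
  step_lemma u k (NNcard_anti u k) s 0 (by simp)

/-- For positive integers `u, k` and `Q := 2u+1`, if `a_1, …, a_k` are
i.i.d. uniform in `{-u, …, u}`, then
`Pr[a_1 + ⋯ + a_k = 0] ≥ Pr[Q ∣ a_1 + ⋯ + a_k] / (2k+1)`. -/
theorem stmt_11 (u k : ℕ) (hu : 1 ≤ u) (hk : 1 ≤ k) :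
    (((Fintype.piFinset fun _ : Fin k => Finset.Icc (-(u : ℤ)) (u : ℤ)).filter
          (fun a : Fin k → ℤ => ∑ i, a i = 0)).card : ℝ) / (2 * (u : ℝ) + 1) ^ k
      ≥ ((((Fintype.piFinset fun _ : Fin k => Finset.Icc (-(u : ℤ)) (u : ℤ)).filter
            (fun a : Fin k → ℤ => (2 * (u : ℤ) + 1) ∣ ∑ i, a i)).card : ℝ)
          / (2 * (u : ℝ) + 1) ^ k) / (2 * (k : ℝ) + 1) := by
  have key : ((Fintype.piFinset fun _ : Fin k => Finset.Icc (-(u : ℤ)) (u : ℤ)).filter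
        (fun a : Fin k → ℤ => (2 * (u : ℤ) + 1) ∣ ∑ i, a i)).card
      ≤ (2 * k + 1) * NNcard u k 0 := by
    have hsub : (Fintype.piFinset fun _ : Fin k => Finset.Icc (-(u : ℤ)) (u : ℤ)).filter
          (fun a : Fin k → ℤ => (2 * (u : ℤ) + 1) ∣ ∑ i, a i)
        ⊆ (Finset.Icc (-(k : ℤ)) (k : ℤ)).biUnion (fun ℓ =>
            (Fintype.piFinset fun _ : Fin k => Finset.Icc (-(u : ℤ)) (u : ℤ)).filter
              (fun a : Fin k → ℤ => ∑ i, a i = ℓ * (2 * (u : ℤ) + 1))) := by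
      intro a ha
      simp only [Finset.mem_filter, Fintype.mem_piFinset, Finset.mem_Icc] at ha
      obtain ⟨hmem, c, hc⟩ := ha
      have habs : |∑ i, a i| ≤ (k : ℤ) * u := by
        calc |∑ i, a i| ≤ ∑ i, |a i| := Finset.abs_sum_le_sum_abs _ _
          _ ≤ ∑ _i : Fin k, (u : ℤ) := by
              refine Finset.sum_le_sum fun i _ => ?_
              have := hmem i; rw [abs_le]; omega
          _ = (k : ℤ) * u := by simp [mul_comm]
      have hc' : |∑ i, a i| = (2 * (u : ℤ) + 1) * |c| := by
        rw [hc, abs_mul, abs_of_pos (by positivity : (0:ℤ) < 2 * (u:ℤ) + 1)]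
      have hcle : |c| ≤ (k : ℤ) := by
        have h1 : (2 * (u : ℤ) + 1) * |c| ≤ (2 * (u : ℤ) + 1) * k := by
          rw [← hc']
          refine habs.trans ?_
          nlinarith [Nat.cast_nonneg (α := ℤ) k, Nat.cast_nonneg (α := ℤ) u]
        exact le_of_mul_le_mul_left h1 (by positivity)
      rw [Finset.mem_biUnion]
      refine ⟨c, ?_, ?_⟩
      · rw [Finset.mem_Icc]; rw [abs_le] at hcle; omega
      · simp only [Finset.mem_filter, Fintype.mem_piFinset, Finset.mem_Icc]
        exact ⟨hmem, by rw [hc]; ring⟩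
    calc ((Fintype.piFinset fun _ : Fin k => Finset.Icc (-(u : ℤ)) (u : ℤ)).filter
          (fun a : Fin k → ℤ => (2 * (u : ℤ) + 1) ∣ ∑ i, a i)).card
        ≤ _ := Finset.card_le_card hsub
      _ ≤ ∑ ℓ ∈ Finset.Icc (-(k : ℤ)) (k : ℤ),
            ((Fintype.piFinset fun _ : Fin k => Finset.Icc (-(u : ℤ)) (u : ℤ)).filter
              (fun a : Fin k → ℤ => ∑ i, a i = ℓ * (2 * (u : ℤ) + 1))).card :=
          Finset.card_biUnion_le
      _ ≤ ∑ _ℓ ∈ Finset.Icc (-(k : ℤ)) (k : ℤ), NNcard u k 0 :=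
          Finset.sum_le_sum fun ℓ _ => NNcard_le_zero u k _
      _ = (2 * k + 1) * NNcard u k 0 := by
          rw [Finset.sum_const, Int.card_Icc, smul_eq_mul]
          congr 1
          omega
  have hN0 : (((Fintype.piFinset fun _ : Fin k => Finset.Icc (-(u : ℤ)) (u : ℤ)).filter
      (fun a : Fin k → ℤ => ∑ i, a i = 0)).card : ℝ) = (NNcard u k 0 : ℝ) := by rfl
  rw [ge_iff_le, div_div, div_le_div_iff₀ (by positivity) (by positivity), hN0]
  have keyR : ((((Fintype.piFinset fun _ : Fin k => Finset.Icc (-(u : ℤ)) (u : ℤ)).filter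
        (fun a : Fin k → ℤ => (2 * (u : ℤ) + 1) ∣ ∑ i, a i)).card : ℝ))
      ≤ (2 * (k : ℝ) + 1) * (NNcard u k 0 : ℝ) := by
    exact_mod_cast Nat.cast_le.mpr key
  have hpow : (0:ℝ) < (2 * (u : ℝ) + 1) ^ k := by positivity
  nlinarith [mul_le_mul_of_nonneg_right keyR hpow.le]
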